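/- Let A be a unital k-algebra and let S be a commutative associative unital k-algebra. Then the map ψ : C(A)⊗S → C(A⊗S), determined by ψ(γ⊗s) = γ⊗L_s, is an isomorphism of associative algebras. -/

import Mathlib

open TensorProduct

set_option synthInstance.maxHeartbeats 1000000
set_option maxHeartbeats 2000000

noncomputable section

/-- The set of derivations of a (possibly non-associative, non-unital) `k`-algebra `B`,
as a submodule of `Module.End k B`. -/
def Derivations (k B : Type) [Field k] [NonUnitalNonAssocSemiring B] [Module k B]
    [SMulCommClass k B B] [IsScalarTower k B B] :
    Submodule k (Module.End k B) where
  carrier := {d | ∀ x y : B, d (x * y) = d x * y + x * d y}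
  add_mem' := by
    intro f g hf hg x y
    simp only [LinearMap.add_apply, hf x y, hg x y, add_mul, mul_add]
    abel
  zero_mem' := by intro x y; simp
  smul_mem' := by
    intro c f hf x y
    simp only [LinearMap.smul_apply, hf x y, smul_add, smul_mul_assoc, mul_smul_comm]

/-- The centroid of a (possibly non-associative, non-unital) `k`-algebra `B`, as a
subalgebra of `Module.End k B`. -/
def centroid (k B : Type) [Field k] [NonUnitalNonAssocSemiring B] [Module k B]
    [SMulCommClass k B B] [IsScalarTower k B B] :
    Subalgebra k (Module.End k B) where
  carrier := {γ | ∀ x y : B, γ (x * y) = γ x * y ∧ γ (x * y) = x * γ y}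
  mul_mem' := by
    intro γ δ hγ hδ x y
    constructor
    · show γ (δ (x * y)) = γ (δ x) * y
      rw [(hδ x y).1, (hγ (δ x) y).1]
    · show γ (δ (x * y)) = x * γ (δ y)
      rw [(hδ x y).2, (hγ x (δ y)).2]
  one_mem' := by intro x y; exact ⟨rfl, rfl⟩
  add_mem' := by
    intro γ δ hγ hδ x y
    constructor
    · simp [LinearMap.add_apply, (hγ x y).1, (hδ x y).1, add_mul]
    · simp [LinearMap.add_apply, (hγ x y).2, (hδ x y).2, mul_add]
  zero_mem' := by intro x y; simp
  algebraMap_mem' := by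
    intro c x y
    constructor
    · simp [Module.algebraMap_end_apply, smul_mul_assoc]
    · simp [Module.algebraMap_end_apply, mul_smul_comm]

/-- A `k`-algebra is perfect if it is spanned by products. -/
def IsPerfectAlg (k B : Type) [Field k] [NonUnitalNonAssocSemiring B] [Module k B] : Prop :=
  Submodule.span k {z : B | ∃ x y : B, x * y = z} = ⊤

/-- The natural map `ψ : C(A) ⊗ S → End(A ⊗ S)`, `γ ⊗ s ↦ γ ⊗ L_s`. -/
def psi (k A S : Type) [Field k] [NonUnitalNonAssocRing A] [Module k A]
    [SMulCommClass k A A] [IsScalarTower k A A] [CommRing S] [Algebra k S] :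
    (↥(centroid k A) ⊗[k] S) →ₗ[k] Module.End k (A ⊗[k] S) :=
  (TensorProduct.homTensorHomMap (RingHom.id k) A S A S).comp
    (TensorProduct.map (centroid k A).val.toLinearMap (LinearMap.mul k S))
/-- `B` is finitely generated as a module over a set `Γ` of `k`-linear endomorphisms
(e.g. over its centroid or differential centroid). -/
def FGOverSet (k B : Type) [Field k] [AddCommMonoid B] [Module k B]
    (Γ : Set (Module.End k B)) : Prop :=
  ∃ (n : ℕ) (a : Fin n → B), ∀ x : B, ∃ γ : Fin n → Module.End k B,
    (∀ i, γ i ∈ Γ) ∧ x = ∑ i, γ i (a i)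

set_option linter.unusedSectionVars false

section Aux

variable (k A S : Type) [Field k] [NonAssocRing A] [Module k A]
    [SMulCommClass k A A] [IsScalarTower k A A] [CommRing S] [Algebra k S]

/-- The coordinate equivalence for `A ⊗ S` induced by a basis of `S`. -/
def eeAux : (A ⊗[k] S) ≃ₗ[k] (Module.Basis.ofVectorSpaceIndex k S →₀ A) :=
  letI := Classical.decEq (Module.Basis.ofVectorSpaceIndex k S)
  (LinearEquiv.lTensor A (Module.Basis.ofVectorSpace k S).repr) ≪≫ₗ
    TensorProduct.finsuppScalarRight k k A (Module.Basis.ofVectorSpaceIndex k S)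

variable {k A S}

lemma eeAux_tmul (a : A) (t : S) (i : Module.Basis.ofVectorSpaceIndex k S) :
    eeAux k A S (a ⊗ₜ[k] t) i = (Module.Basis.ofVectorSpace k S).repr t i • a := by
  simp [eeAux]

lemma eeAux_symm_single (i : Module.Basis.ofVectorSpaceIndex k S) (a : A) :
    (eeAux k A S).symm (Finsupp.single i a) = a ⊗ₜ[k] (Module.Basis.ofVectorSpace k S i) := by
  rw [LinearEquiv.symm_apply_eq]
  ext j
  rw [eeAux_tmul, Module.Basis.repr_self]
  classical
  rcases eq_or_ne i j with rfl | h
  · simp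
  · simp [Finsupp.single_apply_eq_zero, h, Ne.symm h]

lemma eeAux_expand (z : A ⊗[k] S) :
    ∑ i ∈ (eeAux k A S z).support, (eeAux k A S z i) ⊗ₜ[k] (Module.Basis.ofVectorSpace k S i) = z :=
  calc ∑ i ∈ (eeAux k A S z).support, (eeAux k A S z i) ⊗ₜ[k] (Module.Basis.ofVectorSpace k S i)
      = ∑ i ∈ (eeAux k A S z).support,
          (eeAux k A S).symm (Finsupp.single i (eeAux k A S z i)) := by
        refine Finset.sum_congr rfl fun i _ => ?_
        rw [eeAux_symm_single]
    _ = (eeAux k A S).symm ((eeAux k A S z).sum Finsupp.single) := by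
        rw [Finsupp.sum, map_sum]
    _ = z := by rw [Finsupp.sum_single, LinearEquiv.symm_apply_apply]

lemma eeAux_mul_right (z : A ⊗[k] S) (y : A) (i : Module.Basis.ofVectorSpaceIndex k S) :
    eeAux k A S (z * (y ⊗ₜ[k] (1 : S))) i = eeAux k A S z i * y := by
  induction z using TensorProduct.induction_on with
  | zero => simp [zero_mul]
  | tmul a s => rw [Algebra.TensorProduct.tmul_mul_tmul]; simp [eeAux_tmul, smul_mul_assoc]
  | add z₁ z₂ h₁ h₂ => rw [add_mul]; simp only [map_add, Finsupp.add_apply, h₁, h₂, add_mul]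

lemma eeAux_mul_left (x : A) (z : A ⊗[k] S) (i : Module.Basis.ofVectorSpaceIndex k S) :
    eeAux k A S ((x ⊗ₜ[k] (1 : S)) * z) i = x * eeAux k A S z i := by
  induction z using TensorProduct.induction_on with
  | zero => simp [mul_zero]
  | tmul a s => rw [Algebra.TensorProduct.tmul_mul_tmul]; simp [eeAux_tmul, mul_smul_comm]
  | add z₁ z₂ h₁ h₂ => rw [mul_add]; simp only [map_add, Finsupp.add_apply, h₁, h₂, mul_add]

lemma mul_oneTmul (z : A ⊗[k] S) : z * ((1 : A) ⊗ₜ[k] (1 : S)) = z := by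
  induction z using TensorProduct.induction_on with
  | zero => rw [zero_mul]
  | tmul a s => rw [Algebra.TensorProduct.tmul_mul_tmul, mul_one, mul_one]
  | add z₁ z₂ h₁ h₂ => rw [add_mul, h₁, h₂]

lemma psi_tmul (γ : ↥(centroid k A)) (s : S) (x : A) (t : S) :
    psi k A S (γ ⊗ₜ[k] s) (x ⊗ₜ[k] t) = (γ : Module.End k A) x ⊗ₜ[k] (s * t) := by
  simp [psi, TensorProduct.homTensorHomMap_apply]

end Aux

/-- Lemma 1.1(iv): if `A` is a unital (possibly non-associative) algebra and `S` is a
commutative associative unital algebra, then `ψ : C(A) ⊗ S → C(A ⊗ S)` is an isomorphism of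
associative algebras. -/
theorem psi_isomorphism_of_unital
    (k A S : Type) [Field k] [NonAssocRing A] [Module k A]
    [SMulCommClass k A A] [IsScalarTower k A A] [CommRing S] [Algebra k S] :
    Function.Injective (psi k A S) ∧
      (∀ x y : ↥(centroid k A) ⊗[k] S, psi k A S (x * y) = psi k A S x * psi k A S y) ∧
      psi k A S 1 = 1 ∧
      (∀ T : Module.End k (A ⊗[k] S),
        T ∈ LinearMap.range (psi k A S) ↔ T ∈ centroid k (A ⊗[k] S)) := by
  classical
  -- Part 1: injectivity
  have hval : ∀ (γ : ↥(centroid k A)) (x : A),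
      (γ : Module.End k A) x = x * (γ : Module.End k A) 1 := by
    intro γ x
    conv_lhs => rw [← mul_one x]
    exact (γ.2 x 1).2
  let ε : ↥(centroid k A) →ₗ[k] A :=
    { toFun := fun γ => (γ : Module.End k A) 1
      map_add' := by intros; rfl
      map_smul' := by intros; rfl }
  have hε : Function.Injective ε := by
    intro γ δ h
    apply Subtype.ext
    apply LinearMap.ext
    intro x
    rw [show ((γ : Module.End k A) x) = x * (γ : Module.End k A) 1 from hval γ x,
      show ((δ : Module.End k A) x) = x * (δ : Module.End k A) 1 from hval δ x]
    exact congrArg (x * ·) h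
  have hkey : ∀ u : ↥(centroid k A) ⊗[k] S,
      psi k A S u ((1 : A) ⊗ₜ[k] (1 : S)) = ε.rTensor S u := by
    intro u
    induction u using TensorProduct.induction_on with
    | zero => simp
    | tmul γ s => rw [psi_tmul, LinearMap.rTensor_tmul]; simp [ε]
    | add u v hu hv => simp only [map_add, LinearMap.add_apply, hu, hv]
  have hinj : Function.Injective (psi k A S) := by
    intro u v h
    refine Module.Flat.rTensor_preserves_injective_linearMap (M := S) ε hε ?_
    rw [← hkey u, ← hkey v, h]
  -- Part 2: multiplicativity
  have hmul : ∀ x y : ↥(centroid k A) ⊗[k] S,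
      psi k A S (x * y) = psi k A S x * psi k A S y := by
    intro x y
    induction x using TensorProduct.induction_on with
    | zero => simp [zero_mul]
    | add x₁ x₂ h₁ h₂ => simp only [add_mul, map_add, h₁, h₂]
    | tmul γ s =>
      induction y using TensorProduct.induction_on with
      | zero => simp [mul_zero]
      | add y₁ y₂ h₁ h₂ => simp only [mul_add, map_add, h₁, h₂]
      | tmul δ s' =>
        rw [Algebra.TensorProduct.tmul_mul_tmul]
        apply TensorProduct.ext'
        intro x t
        rw [psi_tmul, Module.End.mul_apply, psi_tmul, psi_tmul]
        rw [MulMemClass.coe_mul, Module.End.mul_apply, mul_assoc]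
  -- Part 3: unitality
  have hone : psi k A S 1 = 1 := by
    rw [Algebra.TensorProduct.one_def]
    apply TensorProduct.ext'
    intro x t
    rw [psi_tmul]
    simp
  -- Part 4: range = centroid
  refine ⟨hinj, hmul, hone, fun T => ⟨?_, ?_⟩⟩
  · -- range ⊆ centroid
    rintro ⟨u, rfl⟩
    have h1 : ∀ (γ : ↥(centroid k A)) (s : S) (z w : A ⊗[k] S),
        psi k A S (γ ⊗ₜ[k] s) (z * w) = psi k A S (γ ⊗ₜ[k] s) z * w := by
      intro γ s z
      induction z using TensorProduct.induction_on with
      | zero => intro w; simp [zero_mul]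
      | add z₁ z₂ hz₁ hz₂ => intro w; simp only [add_mul, map_add, hz₁, hz₂]
      | tmul x t =>
        intro w
        induction w using TensorProduct.induction_on with
        | zero => simp [mul_zero]
        | add w₁ w₂ hw₁ hw₂ => simp only [mul_add, map_add, hw₁, hw₂]
        | tmul y t' =>
          rw [Algebra.TensorProduct.tmul_mul_tmul, psi_tmul, psi_tmul,
            Algebra.TensorProduct.tmul_mul_tmul, (γ.2 x y).1, mul_assoc]
    have h2 : ∀ (γ : ↥(centroid k A)) (s : S) (z w : A ⊗[k] S),
        psi k A S (γ ⊗ₜ[k] s) (z * w) = z * psi k A S (γ ⊗ₜ[k] s) w := by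
      intro γ s z
      induction z using TensorProduct.induction_on with
      | zero => intro w; simp [zero_mul]
      | add z₁ z₂ hz₁ hz₂ => intro w; simp only [add_mul, map_add, hz₁, hz₂]
      | tmul x t =>
        intro w
        induction w using TensorProduct.induction_on with
        | zero => simp [mul_zero]
        | add w₁ w₂ hw₁ hw₂ => simp only [mul_add, map_add, hw₁, hw₂]
        | tmul y t' =>
          rw [Algebra.TensorProduct.tmul_mul_tmul, psi_tmul, psi_tmul,
            Algebra.TensorProduct.tmul_mul_tmul, (γ.2 x y).2, mul_left_comm]
    have h1' : ∀ (u : ↥(centroid k A) ⊗[k] S) (z w : A ⊗[k] S),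
        psi k A S u (z * w) = psi k A S u z * w := by
      intro u
      induction u using TensorProduct.induction_on with
      | zero => intro z w; simp [zero_mul]
      | tmul γ s => exact h1 γ s
      | add u v hu hv => intro z w; simp only [map_add, LinearMap.add_apply, add_mul, hu, hv]
    have h2' : ∀ (u : ↥(centroid k A) ⊗[k] S) (z w : A ⊗[k] S),
        psi k A S u (z * w) = z * psi k A S u w := by
      intro u
      induction u using TensorProduct.induction_on with
      | zero => intro z w; simp [mul_zero]
      | tmul γ s => exact h2 γ s
      | add u v hu hv => intro z w; simp only [map_add, LinearMap.add_apply, mul_add, hu, hv]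
    exact fun z w => ⟨h1' u z w, h2' u z w⟩
  · -- centroid ⊆ range
    intro hT
    set c : A ⊗[k] S := T ((1 : A) ⊗ₜ[k] (1 : S)) with hc
    have hTz : ∀ z : A ⊗[k] S, T z = z * c := by
      intro z
      conv_lhs => rw [← mul_oneTmul z]
      exact (hT z ((1 : A) ⊗ₜ[k] (1 : S))).2
    have hmem : ∀ i, LinearMap.mulRight k (eeAux k A S c i) ∈ centroid k A := by
      intro i x y
      have h1 := (hT ((x : A) ⊗ₜ[k] (1 : S)) (y ⊗ₜ[k] (1 : S))).1
      have h2 := (hT ((x : A) ⊗ₜ[k] (1 : S)) (y ⊗ₜ[k] (1 : S))).2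
      rw [Algebra.TensorProduct.tmul_mul_tmul, mul_one] at h1 h2
      simp only [hTz] at h1 h2
      constructor
      · have := congrArg (fun z => eeAux k A S z i) h1
        simpa only [eeAux_mul_left, eeAux_mul_right, LinearMap.mulRight_apply] using this
      · have := congrArg (fun z => eeAux k A S z i) h2
        simpa only [eeAux_mul_left, eeAux_mul_right, LinearMap.mulRight_apply] using this
    refine ⟨∑ i ∈ (eeAux k A S c).support,
      (⟨LinearMap.mulRight k (eeAux k A S c i), hmem i⟩ : ↥(centroid k A)) ⊗ₜ[k]
        ((Module.Basis.ofVectorSpace k S) i : S), ?_⟩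
    apply TensorProduct.ext'
    intro x t
    rw [map_sum, LinearMap.sum_apply]
    rw [show T (x ⊗ₜ[k] t) = (x ⊗ₜ[k] t) * c from hTz _]
    conv_rhs => rw [← eeAux_expand c]
    rw [Finset.mul_sum]
    refine Finset.sum_congr rfl fun i _ => ?_
    rw [psi_tmul, Algebra.TensorProduct.tmul_mul_tmul, mul_comm t]
    rfl


end
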